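/- arXiv:1505.07414 — 2 statements merged into one kernel-verified Lean document; each statement's English description precedes it below -/
import Mathlib

section
/- Let T, p, K be positive natural numbers, let X be a p×T real matrix, let M be a K×K diagonal real matrix with all diagonal entries nonzero, and let F̂ be a T×K real matrix satisfying (Xᵀ X) F̂ = F̂ M and F̂ᵀ F̂ = T · I_K. Define B̂ = T⁻¹ X F̂. Then B̂ᵀ B̂ is invertible and (B̂ᵀ B̂)⁻¹ B̂ᵀ X = F̂ᵀ; equivalently, for every t, the t-th estimated factor vector f̂_t (the t-th column of F̂ᵀ) equals Λ̂_b x_t where Λ̂_b = (B̂ᵀ B̂)⁻¹ B̂ᵀ and x_t is the t-th column of X. -/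
open Matrix

/-- With `B̂ = T⁻¹ X F̂` the constrained least-squares loading estimate,
`B̂ᵀ B̂` is invertible and `(B̂ᵀ B̂)⁻¹ B̂ᵀ X = F̂ᵀ`; equivalently each estimated factor
vector satisfies `f̂_t = Λ̂_b x_t` with `Λ̂_b = (B̂ᵀ B̂)⁻¹ B̂ᵀ`. -/
theorem stmt1 (T p K : ℕ) (hT : 0 < T) (hp : 0 < p) (hK : 0 < K)
    (X : Matrix (Fin p) (Fin T) ℝ)
    (M : Matrix (Fin K) (Fin K) ℝ) (hMdiag : M.IsDiag) (hMnz : ∀ i, M i i ≠ 0)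
    (Fhat : Matrix (Fin T) (Fin K) ℝ)
    (heig : Xᵀ * X * Fhat = Fhat * M)
    (hnorm : Fhatᵀ * Fhat = (T : ℝ) • (1 : Matrix (Fin K) (Fin K) ℝ))
    (Bhat : Matrix (Fin p) (Fin K) ℝ) (hB : Bhat = (T : ℝ)⁻¹ • (X * Fhat)) :
    IsUnit (Bhatᵀ * Bhat) ∧
      (Bhatᵀ * Bhat)⁻¹ * Bhatᵀ * X = Fhatᵀ ∧
      ∀ t : Fin T, (fun k => Fhat t k) =
        ((Bhatᵀ * Bhat)⁻¹ * Bhatᵀ).mulVec (fun i => X i t) := by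
  have hTne : (T : ℝ) ≠ 0 := Nat.cast_ne_zero.mpr hT.ne'
  -- F̂ᵀ Xᵀ X = M F̂ᵀ
  have hMsymm : Mᵀ = M := by
    rw [← hMdiag.diagonal_diag, Matrix.diagonal_transpose]
  have hFXX : Fhatᵀ * (Xᵀ * X) = M * Fhatᵀ := by
    have := congrArg Matrix.transpose heig
    simpa [Matrix.transpose_mul, Matrix.mul_assoc, hMsymm] using this
  -- B̂ᵀ B̂ = T⁻¹ • M
  have hBB : Bhatᵀ * Bhat = (T : ℝ)⁻¹ • M := by
    rw [hB, Matrix.transpose_smul, Matrix.smul_mul, Matrix.mul_smul, smul_smul,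
      Matrix.transpose_mul]
    have : Fhatᵀ * (Xᵀ * (X * Fhat)) = (T : ℝ) • M := by
      calc Fhatᵀ * (Xᵀ * (X * Fhat)) = Fhatᵀ * (Xᵀ * X) * Fhat := by
            simp only [Matrix.mul_assoc]
        _ = M * (Fhatᵀ * Fhat) := by rw [hFXX, Matrix.mul_assoc]
        _ = (T : ℝ) • M := by rw [hnorm, Matrix.mul_smul, Matrix.mul_one]
    rw [Matrix.mul_assoc, this, smul_smul]
    congr 1
    field_simp
  have hdet : (Bhatᵀ * Bhat).det ≠ 0 := by
    rw [hBB, Matrix.det_smul, ← hMdiag.diagonal_diag, Matrix.det_diagonal]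
    exact mul_ne_zero (pow_ne_zero _ (inv_ne_zero hTne))
      (Finset.prod_ne_zero_iff.mpr fun i _ => hMnz i)
  have hunit : IsUnit (Bhatᵀ * Bhat) :=
    (Matrix.isUnit_iff_isUnit_det _).mpr (isUnit_iff_ne_zero.mpr hdet)
  -- B̂ᵀ X = B̂ᵀ B̂ * F̂ᵀ
  have hkey : Bhatᵀ * X = (Bhatᵀ * Bhat) * Fhatᵀ := by
    rw [hBB, hB, Matrix.transpose_smul, Matrix.smul_mul, Matrix.transpose_mul,
      Matrix.smul_mul]
    congr 1
    calc Fhatᵀ * Xᵀ * X = Fhatᵀ * (Xᵀ * X) := by rw [Matrix.mul_assoc]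
      _ = M * Fhatᵀ := hFXX
  have hmain : (Bhatᵀ * Bhat)⁻¹ * Bhatᵀ * X = Fhatᵀ := by
    rw [Matrix.mul_assoc, hkey, ← Matrix.mul_assoc,
      Matrix.nonsing_inv_mul _ (isUnit_iff_ne_zero.mpr hdet), Matrix.one_mul]
  refine ⟨hunit, hmain, fun t => ?_⟩
  funext k
  have := congrFun (congrFun hmain k) t
  simpa [Matrix.mul_apply, Matrix.mulVec, dotProduct, Matrix.transpose_apply] using this.symm
end

section
/- Let n be a positive natural number and let Σ and Σ̂ be n×n real symmetric matrices with eigenvalues λ_1 ≥ … ≥ λ_n (of Σ) and λ̂_1 ≥ … ≥ λ̂_n (of Σ̂) arranged in decreasing order. Fix i ∈ {1, …, n} and let ξ_i be a unit-norm eigenvector of Σ for λ_i and ξ̂_i a unit-norm eigenvector of Σ̂ for λ̂_i. With the conventions λ̂_0 = +∞ and λ̂_{n+1} = −∞, suppose δ := min(|λ̂_{i−1} − λ_i|, |λ_i − λ̂_{i+1}|) > 0. Then, after replacing ξ̂_i by −ξ̂_i if necessary (i.e., for at least one of the two sign choices), ‖ξ̂_i − ξ_i‖ ≤ √2 · ‖Σ̂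 − Σ‖ / δ, where the vector norm is Euclidean and the matrix norm is the spectral norm. -/
open scoped RealInnerProductSpace

variable {n : ℕ}

lemma dk_coeff (B : OrthonormalBasis (Fin n) ℝ (EuclideanSpace ℝ (Fin n)))
    (T : EuclideanSpace ℝ (Fin n) →ₗ[ℝ] EuclideanSpace ℝ (Fin n)) (hT : T.IsSymmetric)
    (lam : Fin n → ℝ) (hB : ∀ j, T (B j) = lam j • B j) (x : EuclideanSpace ℝ (Fin n))
    (j : Fin n) : ⟪B j, T x⟫ = lam j * ⟪B j, x⟫ := by
  rw [← hT (B j) x, hB, real_inner_smul_left]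

lemma dk_normsq (B : OrthonormalBasis (Fin n) ℝ (EuclideanSpace ℝ (Fin n)))
    (x : EuclideanSpace ℝ (Fin n)) : ‖x‖ ^ 2 = ∑ j, ⟪B j, x⟫ ^ 2 := by
  rw [← real_inner_self_eq_norm_sq, ← B.sum_inner_mul_inner x x]
  refine Finset.sum_congr rfl fun j _ => ?_
  rw [real_inner_comm x (B j)]; ring

lemma dk_quad (B : OrthonormalBasis (Fin n) ℝ (EuclideanSpace ℝ (Fin n)))
    (T : EuclideanSpace ℝ (Fin n) →ₗ[ℝ] EuclideanSpace ℝ (Fin n)) (hT : T.IsSymmetric)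
    (lam : Fin n → ℝ) (hB : ∀ j, T (B j) = lam j • B j) (x : EuclideanSpace ℝ (Fin n)) :
    ⟪x, T x⟫ = ∑ j, lam j * ⟪B j, x⟫ ^ 2 := by
  rw [← B.sum_inner_mul_inner x (T x)]
  refine Finset.sum_congr rfl fun j _ => ?_
  rw [dk_coeff B T hT lam hB x j, real_inner_comm x (B j)]; ring

variable {n : ℕ}

-- coefficients of x ∈ span (B '' J) vanish off J
lemma dk_span_coeff (B : OrthonormalBasis (Fin n) ℝ (EuclideanSpace ℝ (Fin n)))
    (J : Finset (Fin n)) (x : EuclideanSpace ℝ (Fin n))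
    (hx : x ∈ Submodule.span ℝ (B '' (J : Set (Fin n)))) {j : Fin n} (hj : j ∉ J) :
    ⟪B j, x⟫ = 0 := by
  induction hx using Submodule.span_induction with
  | mem y hy =>
      obtain ⟨k, hk, rfl⟩ := hy
      exact B.orthonormal.2 (fun h => hj (h ▸ hk))
  | zero => simp
  | add y z _ _ hy hz => rw [inner_add_right, hy, hz, add_zero]
  | smul a y _ hy => rw [real_inner_smul_right, hy, mul_zero]

lemma dk_rank (B : OrthonormalBasis (Fin n) ℝ (EuclideanSpace ℝ (Fin n)))
    (J : Finset (Fin n)) :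
    Module.finrank ℝ (Submodule.span ℝ (B '' (J : Set (Fin n)))) = J.card := by
  have hli : LinearIndependent ℝ (fun j : (J : Set (Fin n)) => B j) :=
    B.orthonormal.linearIndependent.comp Subtype.val Subtype.val_injective
  have := finrank_span_eq_card hli
  rw [← Set.image_eq_range] at this
  rw [this]
  simp

lemma dk_gap (B Bh : OrthonormalBasis (Fin n) ℝ (EuclideanSpace ℝ (Fin n)))
    (T Th : EuclideanSpace ℝ (Fin n) →ₗ[ℝ] EuclideanSpace ℝ (Fin n))
    (hT : T.IsSymmetric) (hTh : Th.IsSymmetric)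
    (lam lamh : Fin n → ℝ)
    (hB : ∀ j, T (B j) = lam j • B j) (hBh : ∀ j, Th (Bh j) = lamh j • Bh j)
    (J K : Finset (Fin n)) (hcard : n < J.card + K.card)
    (a b ε : ℝ) (hJ : ∀ j ∈ J, a ≤ lam j) (hK : ∀ k ∈ K, lamh k ≤ b)
    (hε : ∀ x : EuclideanSpace ℝ (Fin n), ⟪x, T x - Th x⟫ ≤ ε * ‖x‖ ^ 2) :
    a ≤ b + ε := by
  set V := Submodule.span ℝ (B '' (J : Set (Fin n)))
  set W := Submodule.span ℝ (Bh '' (K : Set (Fin n)))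
  have hdim : 0 < Module.finrank ℝ (V ⊓ W : Submodule ℝ (EuclideanSpace ℝ (Fin n))) := by
    have hsum := Submodule.finrank_sup_add_finrank_inf_eq V W
    have h1 : Module.finrank ℝ (V ⊔ W : Submodule ℝ (EuclideanSpace ℝ (Fin n))) ≤ n := by
      simpa [finrank_euclideanSpace_fin] using
        (Submodule.finrank_le (V ⊔ W : Submodule ℝ (EuclideanSpace ℝ (Fin n))))
    rw [dk_rank B J, dk_rank Bh K] at hsum
    omega
  have : Nontrivial (V ⊓ W : Submodule ℝ (EuclideanSpace ℝ (Fin n))) :=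
    Module.nontrivial_of_finrank_pos hdim
  obtain ⟨y, hy⟩ := exists_ne (0 : (V ⊓ W : Submodule ℝ (EuclideanSpace ℝ (Fin n))))
  set x : EuclideanSpace ℝ (Fin n) := (y : EuclideanSpace ℝ (Fin n))
  have hxV : x ∈ V := y.2.1
  have hxW : x ∈ W := y.2.2
  have hx0 : x ≠ 0 := fun h => hy (Subtype.ext h)
  have hnpos : 0 < ‖x‖ ^ 2 := by
    have := norm_pos_iff.mpr hx0
    positivity
  have hxT : a * ‖x‖ ^ 2 ≤ ⟪x, T x⟫ := by
    rw [dk_quad B T hT lam hB x, dk_normsq B x, Finset.mul_sum]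
    refine Finset.sum_le_sum fun j _ => ?_
    by_cases hj : j ∈ J
    · exact mul_le_mul_of_nonneg_right (hJ j hj) (sq_nonneg _)
    · rw [dk_span_coeff B J x hxV hj]; simp
  have hxTh : ⟪x, Th x⟫ ≤ b * ‖x‖ ^ 2 := by
    rw [dk_quad Bh Th hTh lamh hBh x, dk_normsq Bh x, Finset.mul_sum]
    refine Finset.sum_le_sum fun j _ => ?_
    by_cases hj : j ∈ K
    · exact mul_le_mul_of_nonneg_right (hK j hj) (sq_nonneg _)
    · rw [dk_span_coeff Bh K x hxW hj]; simp
  have h := hε x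
  rw [inner_sub_right] at h
  nlinarith [hxT, hxTh, h, hnpos]

lemma dk_weyl (B Bh : OrthonormalBasis (Fin n) ℝ (EuclideanSpace ℝ (Fin n)))
    (T Th : EuclideanSpace ℝ (Fin n) →ₗ[ℝ] EuclideanSpace ℝ (Fin n))
    (hT : T.IsSymmetric) (hTh : Th.IsSymmetric)
    (lam lamh : Fin n → ℝ) (hlam : Antitone lam) (hlamh : Antitone lamh)
    (hB : ∀ j, T (B j) = lam j • B j) (hBh : ∀ j, Th (Bh j) = lamh j • Bh j)
    (ε : ℝ)
    (hε : ∀ x : EuclideanSpace ℝ (Fin n), |⟪x, T x - Th x⟫| ≤ ε * ‖x‖ ^ 2)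
    (i : Fin n) : |lam i - lamh i| ≤ ε := by
  have hcard : n < (Finset.Iic i).card + (Finset.Ici i).card := by
    rw [Fin.card_Iic, Fin.card_Ici]
    omega
  have h1 : lam i ≤ lamh i + ε := by
    refine dk_gap B Bh T Th hT hTh lam lamh hB hBh (Finset.Iic i) (Finset.Ici i) hcard
      (lam i) (lamh i) ε (fun j hj => hlam (Finset.mem_Iic.mp hj))
      (fun k hk => hlamh (Finset.mem_Ici.mp hk)) (fun x => (abs_le.mp (hε x)).2)
  have h2 : lamh i ≤ lam i + ε := by
    refine dk_gap Bh B Th T hTh hT lamh lam hBh hB (Finset.Iic i) (Finset.Ici i) hcard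
      (lamh i) (lam i) ε (fun j hj => hlamh (Finset.mem_Iic.mp hj))
      (fun k hk => hlam (Finset.mem_Ici.mp hk)) (fun x => ?_)
    have := (abs_le.mp (hε x)).1
    have heq : ⟪x, Th x - T x⟫ = -⟪x, T x - Th x⟫ := by
      rw [← inner_neg_right]; congr 1; abel
    rw [heq]; linarith
  rw [abs_sub_le_iff]
  constructor <;> linarith

open Matrix
open scoped Matrix.Norms.L2Operator

set_option maxHeartbeats 1000000 in
/-- (Davis–Kahan `sin θ` theorem, in the form of Lemma A.2(b) of the paper.)
If `μ` and `ν` list the eigenvalues of the real symmetric matrices `S` and `Shat` in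
decreasing order, `ξ` is a unit eigenvector of `S` for `μ i`, `ξhat` a unit eigenvector of
`Shat` for `ν i`, and `δ > 0` is a lower bound for `|ν_{i−1} − μ_i|` and `|μ_i − ν_{i+1}|`
(the conventions `ν_0 = +∞`, `ν_{n+1} = −∞` making absent constraints vacuous), then for at
least one sign choice `‖±ξhat − ξ‖ ≤ √2 ‖Shat − S‖ / δ` (Euclidean and spectral norms). -/
theorem stmt11 (n : ℕ) (hn : 0 < n)
    (S Shat : Matrix (Fin n) (Fin n) ℝ)
    (hS : S.IsHermitian) (hShat : Shat.IsHermitian)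
    (μ ν : Fin n → ℝ)
    (hμanti : Antitone μ) (hνanti : Antitone ν)
    (hμ : ∃ σ : Equiv.Perm (Fin n), μ = hS.eigenvalues ∘ σ)
    (hν : ∃ σ : Equiv.Perm (Fin n), ν = hShat.eigenvalues ∘ σ)
    (i : Fin n)
    (ξ : Fin n → ℝ) (hξ : S.mulVec ξ = μ i • ξ) (hξnorm : ∑ k, ξ k ^ 2 = 1)
    (ξhat : Fin n → ℝ) (hξhat : Shat.mulVec ξhat = ν i • ξhat)
    (hξhatnorm : ∑ k, ξhat k ^ 2 = 1)
    (δ : ℝ) (hδpos : 0 < δ)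
    (hprev : ∀ j : Fin n, (j : ℕ) + 1 = (i : ℕ) → δ ≤ |ν j - μ i|)
    (hnext : ∀ j : Fin n, (i : ℕ) + 1 = (j : ℕ) → δ ≤ |μ i - ν j|) :
    ∃ s : ℝ, (s = 1 ∨ s = -1) ∧
      Real.sqrt (∑ k, (s * ξhat k - ξ k) ^ 2) ≤ Real.sqrt 2 * ‖Shat - S‖ / δ := by
  classical
  obtain ⟨σ1, hσ1⟩ := hμ
  obtain ⟨σ2, hσ2⟩ := hν
  set ε := ‖Shat - S‖ with hεdef
  have hεnn : (0:ℝ) ≤ ε := norm_nonneg _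
  set t := ∑ k, ξhat k * ξ k with ht
  set s : ℝ := if 0 ≤ t then 1 else -1 with hs
  have hs1 : s = 1 ∨ s = -1 := by
    rw [hs]; split <;> simp
  have hst : s * t = |t| := by
    rw [hs]; split
    · rw [one_mul, abs_of_nonneg ‹_›]
    · rw [neg_one_mul, abs_of_neg (by linarith [not_le.mp ‹¬ 0 ≤ t›])]
  have hss : s ^ 2 = 1 := by rcases hs1 with h | h <;> rw [h] <;> norm_num
  have hsum : ∑ k, (s * ξhat k - ξ k) ^ 2 = 2 - 2 * |t| := by
    have h1 : ∑ k, (s * ξhat k - ξ k) ^ 2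
        = ∑ k, (s ^ 2 * ξhat k ^ 2 - 2 * s * (ξhat k * ξ k) + ξ k ^ 2) :=
      Finset.sum_congr rfl fun k _ => by ring
    rw [h1, Finset.sum_add_distrib, Finset.sum_sub_distrib, ← Finset.mul_sum,
      ← Finset.mul_sum, ← ht, hss, hξhatnorm, hξnorm]
    rw [show 2 * s * t = 2 * (s * t) by ring, hst]
    ring
  refine ⟨s, hs1, ?_⟩
  rw [hsum]
  have habs : (0:ℝ) ≤ |t| := abs_nonneg t
  by_cases hcase : δ ≤ ε
  · -- trivial case
    have h2 : Real.sqrt (2 - 2 * |t|) ≤ Real.sqrt 2 :=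
      Real.sqrt_le_sqrt (by linarith)
    refine h2.trans ?_
    rw [mul_div_assoc]
    exact le_mul_of_one_le_right (Real.sqrt_nonneg 2) ((one_le_div hδpos).mpr hcase)
  push_neg at hcase
  -- main case : ε < δ
  set T := Matrix.toEuclideanLin S with hT
  set Th := Matrix.toEuclideanLin Shat with hTh
  have hTsym : T.IsSymmetric := Matrix.isHermitian_iff_isSymmetric.mp hS
  have hThsym : Th.IsSymmetric := Matrix.isHermitian_iff_isSymmetric.mp hShat
  set B := hS.eigenvectorBasis.reindex σ1.symm with hBdef
  set Bh := hShat.eigenvectorBasis.reindex σ2.symm with hBhdef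
  have hB : ∀ j, T (B j) = μ j • B j := by
    intro j
    rw [hBdef, OrthonormalBasis.reindex_apply]
    simp only [Equiv.symm_symm]
    apply (WithLp.equiv 2 (Fin n → ℝ)).injective
    simp only [hT, WithLp.equiv_apply, Matrix.ofLp_toEuclideanLin_apply, WithLp.ofLp_smul]
    rw [hσ1]
    exact hS.mulVec_eigenvectorBasis (σ1 j)
  have hBh : ∀ j, Th (Bh j) = ν j • Bh j := by
    intro j
    rw [hBhdef, OrthonormalBasis.reindex_apply]
    simp only [Equiv.symm_symm]
    apply (WithLp.equiv 2 (Fin n → ℝ)).injective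
    simp only [hTh, WithLp.equiv_apply, Matrix.ofLp_toEuclideanLin_apply, WithLp.ofLp_smul]
    rw [hσ2]
    exact hShat.mulVec_eigenvectorBasis (σ2 j)
  set ξE := (WithLp.equiv 2 (Fin n → ℝ)).symm ξ with hξE
  set ξhatE := (WithLp.equiv 2 (Fin n → ℝ)).symm ξhat with hξhatE
  have hTξ : T ξE = μ i • ξE := by
    rw [hT, hξE, WithLp.equiv_symm_apply, Matrix.toEuclideanLin_apply_piLp_toLp, hξ]; rfl
  have hThξhat : Th ξhatE = ν i • ξhatE := by
    rw [hTh, hξhatE, WithLp.equiv_symm_apply, Matrix.toEuclideanLin_apply_piLp_toLp, hξhat]; rfl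
  have hinner : ∀ x y : Fin n → ℝ,
      ⟪(WithLp.equiv 2 (Fin n → ℝ)).symm x, (WithLp.equiv 2 (Fin n → ℝ)).symm y⟫
        = ∑ k, x k * y k := by
    intro x y
    simp [PiLp.inner_apply, RCLike.inner_apply, mul_comm]
  have hnξ : ‖ξE‖ ^ 2 = 1 := by
    rw [← real_inner_self_eq_norm_sq, hξE, hinner]
    rw [← hξnorm]
    exact Finset.sum_congr rfl fun k _ => by ring
  have hnξhat : ‖ξhatE‖ ^ 2 = 1 := by
    rw [← real_inner_self_eq_norm_sq, hξhatE, hinner]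
    rw [← hξhatnorm]
    exact Finset.sum_congr rfl fun k _ => by ring
  have hnξ1 : ‖ξE‖ = 1 := by nlinarith [norm_nonneg ξE]
  have hopabs : ∀ x : EuclideanSpace ℝ (Fin n), |⟪x, Th x - T x⟫| ≤ ε * ‖x‖ ^ 2 := by
    intro x
    have h1 : Th x - T x = Matrix.toEuclideanLin (Shat - S) x := by
      rw [map_sub]; rfl
    calc |⟪x, Th x - T x⟫| ≤ ‖x‖ * ‖Th x - T x‖ := abs_real_inner_le_norm x _
      _ ≤ ‖x‖ * (ε * ‖x‖) := by
          refine mul_le_mul_of_nonneg_left ?_ (norm_nonneg x)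
          rw [h1]
          exact (Shat - S).l2_opNorm_mulVec x
      _ = ε * ‖x‖ ^ 2 := by ring
  have weyl : ∀ k, |ν k - μ k| ≤ ε := fun k =>
    dk_weyl Bh B Th T hThsym hTsym ν μ hνanti hμanti hBh hB ε hopabs k
  -- gap: all other eigenvalues of Shat are δ-far from μ i
  have hgap : ∀ j, j ≠ i → δ ≤ |ν j - μ i| := by
    intro j hj
    rcases lt_or_gt_of_ne (fun h : (j:ℕ) = (i:ℕ) => hj (Fin.ext h)) with hlt | hgt
    · -- j < i
      have hi0 : 0 < (i : ℕ) := by omega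
      set p : Fin n := ⟨(i:ℕ) - 1, by omega⟩ with hp
      have hp1 : (p : ℕ) + 1 = (i : ℕ) := by simp [hp]; omega
      have hprevp := hprev p hp1
      have hwp := weyl p
      have hμpi : μ i ≤ μ p := hμanti (by rw [Fin.le_def]; omega)
      have hνpi : δ ≤ ν p - μ i := by
        rcases abs_cases (ν p - μ i) with ⟨h1, _⟩ | ⟨h1, _⟩
        · linarith
        · exfalso
          rcases abs_cases (ν p - μ p) with ⟨h2, _⟩ | ⟨h2, _⟩ <;> linarith
      have hνjp : ν p ≤ ν j := hνanti (by rw [Fin.le_def]; omega)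
      calc δ ≤ ν j - μ i := by linarith
        _ ≤ |ν j - μ i| := le_abs_self _
    · -- j > i
      have hq1 : (i : ℕ) + 1 < n := by omega
      set q : Fin n := ⟨(i:ℕ) + 1, hq1⟩ with hq
      have hnextq := hnext q (by simp [hq])
      have hwq := weyl q
      have hμqi : μ q ≤ μ i := hμanti (by rw [Fin.le_def]; simp [hq])
      have hνqi : δ ≤ μ i - ν q := by
        rcases abs_cases (μ i - ν q) with ⟨h1, _⟩ | ⟨h1, _⟩
        · linarith
        · exfalso
          rcases abs_cases (ν q - μ q) with ⟨h2, _⟩ | ⟨h2, _⟩ <;> linarith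
      have hνjq : ν j ≤ ν q := hνanti (by rw [Fin.le_def]; simp [hq]; omega)
      calc δ ≤ -(ν j - μ i) := by linarith
        _ ≤ |ν j - μ i| := neg_le_abs _
  have hνi : |ν i - μ i| ≤ ε := weyl i
  set c : Fin n → ℝ := fun j => ⟪Bh j, ξE⟫ with hc
  set d : Fin n → ℝ := fun j => ⟪Bh j, ξhatE⟫ with hd
  -- key1
  have key1 : ∑ j, (ν j - μ i) ^ 2 * c j ^ 2 ≤ ε ^ 2 := by
    set y := Th ξE - T ξE with hy
    have hyj : ∀ j, ⟪Bh j, y⟫ = (ν j - μ i) * c j := by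
      intro j
      rw [hy, inner_sub_right, dk_coeff Bh Th hThsym ν hBh, hTξ, real_inner_smul_right,
        hc]
      ring
    have hyn : ‖y‖ ≤ ε := by
      have h1 : y = Matrix.toEuclideanLin (Shat - S) ξE := by rw [hy, map_sub]; rfl
      calc ‖y‖ = ‖Matrix.toEuclideanLin (Shat - S) ξE‖ := by rw [h1]
        _ ≤ ε * ‖ξE‖ := (Shat - S).l2_opNorm_mulVec ξE
        _ = ε := by rw [hnξ1, mul_one]
    calc ∑ j, (ν j - μ i) ^ 2 * c j ^ 2 = ∑ j, ⟪Bh j, y⟫ ^ 2 :=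
          Finset.sum_congr rfl fun j _ => by rw [hyj j]; ring
      _ = ‖y‖ ^ 2 := (dk_normsq Bh y).symm
      _ ≤ ε ^ 2 := pow_le_pow_left₀ (norm_nonneg y) hyn 2
  -- key2
  have key2 : ∀ j, j ≠ i → d j = 0 := by
    intro j hj
    have h1 : ⟪Bh j, Th ξhatE⟫ = ν j * d j := dk_coeff Bh Th hThsym ν hBh ξhatE j
    have h2 : ⟪Bh j, Th ξhatE⟫ = ν i * d j := by
      rw [hThξhat, real_inner_smul_right, hd]
    have hne : ν j ≠ ν i := by
      intro heq
      have := hgap j hj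
      rw [heq] at this
      rcases abs_cases (ν i - μ i) with ⟨ha, _⟩ | ⟨ha, _⟩ <;> linarith
    have : (ν j - ν i) * d j = 0 := by rw [sub_mul]; rw [h1] at h2; linarith
    rcases mul_eq_zero.mp this with h | h
    · exact absurd (by linarith : ν j = ν i) hne
    · exact h
  have hdsum : ∑ j, d j ^ 2 = 1 := by
    rw [← dk_normsq Bh ξhatE, hnξhat]
  have hdi : d i ^ 2 = 1 := by
    have hsingle : ∑ j, d j ^ 2 = d i ^ 2 :=
      Finset.sum_eq_single_of_mem i (Finset.mem_univ i) (fun j _ hj => by simp [key2 j hj])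
    rw [← hsingle]
    exact hdsum
  have hcsum : ∑ j, c j ^ 2 = 1 := by
    rw [← dk_normsq Bh ξE, hnξ]
  have hti : t = d i * c i := by
    have h1 : t = ⟪ξhatE, ξE⟫ := (hinner ξhat ξ).symm
    rw [h1, ← Bh.sum_inner_mul_inner ξhatE ξE]
    have h2 : ∀ j, ⟪ξhatE, Bh j⟫ * ⟪Bh j, ξE⟫ = d j * c j := fun j => by
      rw [real_inner_comm (Bh j) ξhatE]
    calc ∑ j, ⟪ξhatE, Bh j⟫ * ⟪Bh j, ξE⟫ = ∑ j, d j * c j :=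
          Finset.sum_congr rfl fun j _ => h2 j
      _ = d i * c i :=
          Finset.sum_eq_single_of_mem i (Finset.mem_univ i)
            (fun j _ hj => by simp [key2 j hj])
  have ht2 : t ^ 2 = c i ^ 2 := by rw [hti, mul_pow, hdi, one_mul]
  have key3 : δ ^ 2 * (1 - c i ^ 2) ≤ ε ^ 2 := by
    have h1 : 1 - c i ^ 2 = ∑ j ∈ Finset.univ.erase i, c j ^ 2 := by
      have h0 : c i ^ 2 + ∑ j ∈ Finset.univ.erase i, c j ^ 2 = 1 := by
        rw [← hcsum]
        exact Finset.add_sum_erase _ (fun j => c j ^ 2) (Finset.mem_univ i)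
      linarith
    rw [h1, Finset.mul_sum]
    calc ∑ j ∈ Finset.univ.erase i, δ ^ 2 * c j ^ 2
        ≤ ∑ j ∈ Finset.univ.erase i, (ν j - μ i) ^ 2 * c j ^ 2 := by
          refine Finset.sum_le_sum fun j hj => ?_
          have hj' := Finset.ne_of_mem_erase hj
          have hg := hgap j hj'
          have hsq : δ ^ 2 ≤ (ν j - μ i) ^ 2 := by
            have h2 := pow_le_pow_left₀ hδpos.le hg 2
            rwa [sq_abs] at h2
          exact mul_le_mul_of_nonneg_right hsq (sq_nonneg _)
      _ ≤ ∑ j, (ν j - μ i) ^ 2 * c j ^ 2 :=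
          Finset.sum_le_sum_of_subset_of_nonneg (Finset.erase_subset _ _)
            (fun j _ _ => by positivity)
      _ ≤ ε ^ 2 := key1
  have habs1 : |t| ≤ 1 := by
    have h1 : c i ^ 2 ≤ 1 :=
      hcsum ▸ Finset.single_le_sum (fun j _ => sq_nonneg (c j)) (Finset.mem_univ i)
    have h2 : t ^ 2 ≤ 1 := by rw [ht2]; exact h1
    nlinarith [sq_abs t, abs_nonneg t]
  have hfin : 2 - 2 * |t| ≤ 2 * ε ^ 2 / δ ^ 2 := by
    have h3 : t ^ 2 ≤ |t| := by nlinarith [sq_abs t, abs_nonneg t]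
    have h4 : δ ^ 2 * (1 - t ^ 2) ≤ ε ^ 2 := by rw [ht2]; exact key3
    have h5 : 1 - t ^ 2 ≤ ε ^ 2 / δ ^ 2 := by
      rw [le_div_iff₀ (by positivity)]
      linarith
    calc 2 - 2 * |t| ≤ 2 - 2 * t ^ 2 := by linarith
      _ ≤ 2 * (ε ^ 2 / δ ^ 2) := by linarith
      _ = 2 * ε ^ 2 / δ ^ 2 := by ring
  have hrt : Real.sqrt (2 - 2 * |t|) ≤ Real.sqrt (2 * ε ^ 2 / δ ^ 2) :=
    Real.sqrt_le_sqrt hfin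
  refine hrt.trans_eq ?_
  rw [show 2 * ε ^ 2 / δ ^ 2 = (Real.sqrt 2 * ε / δ) ^ 2 by
    rw [div_pow, mul_pow, Real.sq_sqrt (by norm_num : (0:ℝ) ≤ 2)]]
  exact Real.sqrt_sq (by positivity)
end
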